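/- Let (X,σ) be a δ-hyperbolic GCB-space that is P₀-packed at scale r₀, Γ a group of σ-isometries acting discretely and freely, and x ∈ X a basepoint. For τ ≥ 0 set K_τ = {γ ∈ Loc-Geod_σ(Γ\X) : γ(n) ∈ closed ball B̄(πx,τ) for all n ∈ ℤ}. Then K_τ is a compact Φ₁-invariant subset of Loc-Geod_σ(Γ\X) for every τ ≥ 0, and every compact Φ₁-invariant subset of Loc-Geod_σ(Γ\X) is contained in K_τ for some τ ≥ 0. -/

import Mathlib

open Filter Metric Set MeasureTheory Topology
open scoped ENNReal NNReal

noncomputable section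

namespace Paper

variable {X : Type*} [MetricSpace X]

/-- The Gromov product `(y,z)_x`. -/
def gromov (x y z : X) : ℝ := (dist x y + dist x z - dist y z) / 2

/-- `δ`-hyperbolicity via the four points condition on Gromov products. -/
def IsHyperbolic (X : Type*) [MetricSpace X] (δ : ℝ) : Prop :=
  ∀ w x y z : X, min (gromov w x y) (gromov w y z) - δ ≤ gromov w x z

/-- `X` is `P₀`-packed at scale `r₀`: every closed ball of radius `3r₀` contains at most `P₀`
points that are pairwise `2r₀`-separated. -/
def IsPacked (X : Type*) [MetricSpace X] (P₀ : ℕ) (r₀ : ℝ) : Prop :=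
  ∀ (x : X) (s : Finset X), (↑s : Set X) ⊆ Metric.closedBall x (3 * r₀) →
    (∀ y ∈ s, ∀ z ∈ s, y ≠ z → 2 * r₀ < dist y z) → s.card ≤ P₀

/-- A `σ`-geodesic line: an isometric line all whose subsegments are `σ`-geodesics. -/
structure IsSigmaGeodLine (σ : X → X → ℝ → X) (γ : ℝ → X) : Prop where
  isom : Isometry γ
  seg : ∀ s t : ℝ, s ≤ t → ∀ l ∈ Set.Icc (0:ℝ) 1, σ (γ s) (γ t) l = γ (s + l * (t - s))

/-- `(X,σ)` is a GCB-space: `σ` is a convex, consistent, reversible, geodesically complete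
geodesic bicombing on the (complete) metric space `X`. -/
structure IsGCB (σ : X → X → ℝ → X) : Prop where
  source : ∀ x y : X, σ x y 0 = x
  target : ∀ x y : X, σ x y 1 = y
  propor : ∀ x y : X, ∀ s ∈ Set.Icc (0:ℝ) 1, ∀ t ∈ Set.Icc (0:ℝ) 1,
    dist (σ x y s) (σ x y t) = |s - t| * dist x y
  convex : ∀ x y x' y' : X, ConvexOn ℝ (Set.Icc (0:ℝ) 1) fun t => dist (σ x y t) (σ x' y' t)
  consistent : ∀ x y : X, ∀ s t : ℝ, 0 ≤ s → s ≤ t → t ≤ 1 → ∀ l ∈ Set.Icc (0:ℝ) 1,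
    σ (σ x y s) (σ x y t) l = σ x y ((1 - l) * s + l * t)
  reversible : ∀ x y : X, ∀ t ∈ Set.Icc (0:ℝ) 1, σ x y t = σ y x (1 - t)
  geodComplete : ∀ x y : X, ∃ γ : ℝ → X, IsSigmaGeodLine σ γ ∧ ∃ a b : ℝ, a ≤ b ∧
    b - a = dist x y ∧ ∀ l ∈ Set.Icc (0:ℝ) 1, γ (a + l * (b - a)) = σ x y l

section Group

variable (G : Type*) [Group G] [MulAction G X]

/-- A group of isometries is discrete if orbits meet balls in finitely many elements. -/
def DiscreteAction (X : Type*) [MetricSpace X] [MulAction G X] : Prop :=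
  ∀ (x : X) (R : ℝ), {g : G | dist x (g • x) ≤ R}.Finite

/-- The action is free. -/
def FreeAction (X : Type*) [MetricSpace X] [MulAction G X] : Prop :=
  ∀ (g : G) (x : X), g • x = x → g = 1

/-- `Γ` acts by `σ`-isometries. -/
def SigmaEquivariant (σ : X → X → ℝ → X) : Prop :=
  ∀ (g : G) (x y : X), ∀ t ∈ Set.Icc (0:ℝ) 1, g • σ x y t = σ (g • x) (g • y) t

/-- The number of orbit points in the open ball `B(x,T)`. -/
def orbitCount (x : X) (T : ℝ) : ℕ :=
  Nat.card {y : X // y ∈ MulAction.orbit G x ∧ dist x y < T}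

/-- The critical exponent `h_Γ = limsup (1/T) log #(Γx ∩ B(x,T))`. -/
def critExp (x : X) : EReal :=
  limsup (fun T : ℝ => ((Real.log (orbitCount G x T) / T : ℝ) : EReal)) atTop

end Group

/-- The quotient space `Γ\X`. -/
def QuotX (G : Type*) (X : Type*) [Group G] [MulAction G X] [MetricSpace X] :=
  Quotient (MulAction.orbitRel G X)

section Quot

variable (G : Type*) [Group G] [MulAction G X] [IsIsometricSMul G X]

private lemma bddb (x y : X) : BddBelow (Set.range fun g : G => dist x (g • y)) :=
  ⟨0, by rintro _ ⟨g, rfl⟩; exact dist_nonneg⟩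

/-- The quotient distance `d(πx,πy) = inf_g d(x, g·y)`. -/
def qdist (a b : QuotX G X) : ℝ :=
  ⨅ g : G, dist (Quotient.out a) (g • Quotient.out b)

private lemma qdist_self (a : QuotX G X) : qdist G a a = 0 := by
  refine le_antisymm ?_ (le_ciInf fun g => dist_nonneg)
  have h := ciInf_le (bddb G (Quotient.out a) (Quotient.out a)) (1 : G)
  exact h.trans_eq (by simp)

private lemma qdist_comm_le (a b : QuotX G X) : qdist G a b ≤ qdist G b a := by
  refine le_ciInf fun g => ?_
  have h := ciInf_le (bddb G (Quotient.out a) (Quotient.out b)) g⁻¹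
  refine h.trans_eq ?_
  rw [← dist_smul g (Quotient.out a) (g⁻¹ • Quotient.out b), smul_inv_smul, dist_comm]

private lemma qdist_triangle (a b c : QuotX G X) :
    qdist G a c ≤ qdist G a b + qdist G b c := by
  refine le_of_forall_pos_le_add fun ε hε => ?_
  have h1 : qdist G a b < qdist G a b + ε / 2 := lt_add_of_pos_right _ (half_pos hε)
  have h2 : qdist G b c < qdist G b c + ε / 2 := lt_add_of_pos_right _ (half_pos hε)
  obtain ⟨g, hg⟩ := exists_lt_of_ciInf_lt h1
  obtain ⟨h, hh⟩ := exists_lt_of_ciInf_lt h2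
  have key : qdist G a c ≤ dist (Quotient.out a) ((g * h) • Quotient.out c) :=
    ciInf_le (bddb G _ _) (g * h)
  have e : dist (g • Quotient.out b) ((g * h) • Quotient.out c)
      = dist (Quotient.out b) (h • Quotient.out c) := by
    rw [mul_smul, dist_smul]
  have tri := dist_triangle (Quotient.out a) (g • Quotient.out b) ((g * h) • Quotient.out c)
  rw [e] at tri
  have := key.trans tri
  linarith

/-- The quotient pseudometric on `Γ\X` (a genuine metric whenever the action is discrete
and free). -/
instance : PseudoMetricSpace (QuotX G X) where
  dist := qdist G
  dist_self := qdist_self G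
  dist_comm a b := le_antisymm (qdist_comm_le G a b) (qdist_comm_le G b a)
  dist_triangle := qdist_triangle G

/-- The projection `π : X → Γ\X`. -/
def projQ (x : X) : QuotX G X := Quotient.mk (MulAction.orbitRel G X) x

lemma projQ_dist_le (x y : X) : dist (projQ G x) (projQ G y) ≤ dist x y := by
  obtain ⟨k, hk⟩ := MulAction.mem_orbit_iff.mp
    ((MulAction.orbitRel_apply (G := G)).mp (Quotient.mk_out (s := MulAction.orbitRel G X) x))
  obtain ⟨l, hl⟩ := MulAction.mem_orbit_iff.mp
    ((MulAction.orbitRel_apply (G := G)).mp (Quotient.mk_out (s := MulAction.orbitRel G X) y))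
  have h1 : dist (projQ G x) (projQ G y)
      ≤ dist (Quotient.out (projQ G x)) ((k * l⁻¹) • Quotient.out (projQ G y)) :=
    ciInf_le (bddb G _ _) (k * l⁻¹)
  have hk2 : Quotient.out (projQ G x) = k • x := hk.symm
  have hl2 : Quotient.out (projQ G y) = l • y := hl.symm
  rw [hk2, hl2, smul_smul, inv_mul_cancel_right, dist_smul] at h1
  exact h1

/-- `π` as a continuous (1-Lipschitz) map. -/
def projCM : C(X, QuotX G X) :=
  ⟨projQ G, (LipschitzWith.of_dist_le_mul (K := 1) fun a b => by
    simpa using projQ_dist_le G a b).continuous⟩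

end Quot

end Paper

namespace Paper

variable {X : Type*} [MetricSpace X]

/-- The space of local geodesic lines of a (pseudo)metric space `Y`, as a subset of the space
of continuous maps `ℝ → Y` (with the topology of uniform convergence on compact sets). -/
def LocGeodSet (Y : Type*) [PseudoMetricSpace Y] : Set C(ℝ, Y) :=
  {γ | ∀ t : ℝ, ∃ ε > 0, ∀ s ∈ Set.Icc (t - ε) (t + ε), ∀ u ∈ Set.Icc (t - ε) (t + ε),
    dist (γ s) (γ u) = |s - u|}

/-- The set of (parametrized) `σ`-geodesic lines of `X`. -/
def SigmaGeodLines (σ : X → X → ℝ → X) : Set C(ℝ, X) := {γ | IsSigmaGeodLine σ ⇑γ}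

section Proj

variable (G : Type*) [Group G] [MulAction G X] [IsIsometricSMul G X]

/-- Post-composition with the projection `π : X → Γ\X`. -/
def projComp (γ : C(ℝ, X)) : C(ℝ, QuotX G X) := (projCM G).comp γ

/-- The space `Loc-Geod_σ(Γ\X)`: the image of the `σ`-geodesic lines of `X` under `Π`. -/
def LocGeodQuotSet (σ : X → X → ℝ → X) : Set C(ℝ, QuotX G X) :=
  projComp G '' SigmaGeodLines σ

end Proj

/-- Translation of `ℝ` by `c`, as a continuous map. -/
def trCM (c : ℝ) : C(ℝ, ℝ) := ⟨fun t => t + c, continuous_add_right c⟩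

/-- The reparametrization flow `Φ_c γ = γ(· + c)`. -/
def shiftCM {Y : Type*} [TopologicalSpace Y] (c : ℝ) (γ : C(ℝ, Y)) : C(ℝ, Y) := γ.comp (trCM c)

lemma shift_sigma {σ : X → X → ℝ → X} (c : ℝ) {γ : ℝ → X} (h : IsSigmaGeodLine σ γ) :
    IsSigmaGeodLine σ fun t => γ (t + c) := by
  constructor
  · exact h.isom.comp (Isometry.of_dist_eq fun a b => dist_add_right a b c)
  · intro s t hst l hl
    have h2 := h.seg (s + c) (t + c) (by linarith) l hl
    calc σ (γ (s + c)) (γ (t + c)) l = γ (s + c + l * (t + c - (s + c))) := h2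
    _ = γ (s + l * (t - s) + c) := by ring_nf

section Flow

variable (G : Type*) [Group G] [MulAction G X] [IsIsometricSMul G X]

lemma shift_mem {σ : X → X → ℝ → X} (c : ℝ) {γ : C(ℝ, QuotX G X)}
    (h : γ ∈ LocGeodQuotSet G σ) : shiftCM c γ ∈ LocGeodQuotSet G σ := by
  obtain ⟨γ', hγ', rfl⟩ := h
  exact ⟨shiftCM c γ', shift_sigma c hγ', ContinuousMap.ext fun t => rfl⟩

/-- The time-one map `Φ₁` of the reparametrization flow on `Loc-Geod_σ(Γ\X)`. -/
def flowOne (σ : X → X → ℝ → X) : ↥(LocGeodQuotSet G σ) → ↥(LocGeodQuotSet G σ) :=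
  fun γ => ⟨shiftCM 1 γ.1, shift_mem G 1 γ.2⟩

end Flow

/-- The class `F` of admissible weight functions. -/
structure AdmissibleF (f : ℝ → ℝ) : Prop where
  cont : Continuous f
  pos : ∀ s, 0 < f s
  symm : ∀ s : ℝ, f (-s) = f s
  integrable : MeasureTheory.Integrable f
  mass : ∫ s, f s = 1
  momentIntegrable : MeasureTheory.Integrable fun s : ℝ => 2 * |s| * f s

/-- The constant `C(f) = ∫ 2|s| f(s) ds`. -/
def Cf (f : ℝ → ℝ) : ℝ := ∫ s : ℝ, 2 * |s| * f s

/-- The distance `f(γ,γ') = ∫ d(γ(s),γ'(s)) f(s) ds` on spaces of (local) geodesics. -/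
def fDist (f : ℝ → ℝ) {Y : Type*} [PseudoMetricSpace Y] (γ γ' : C(ℝ, Y)) : ℝ :=
  ∫ s : ℝ, dist (γ s) (γ' s) * f s

section Dynamics

variable {Y : Type*}

/-- The dynamical distance `d^n(y,y') = max_{0 ≤ i ≤ n-1} d(T^i y, T^i y')`. -/
def dynDist (d : Y → Y → ℝ) (T : Y → Y) (n : ℕ) (a b : Y) : ℝ :=
  ⨆ i : Fin n, d (T^[(i : ℕ)] a) (T^[(i : ℕ)] b)

/-- The dynamical ball `B_{d^n}(a,r)`. -/
def dynBall (d : Y → Y → ℝ) (T : Y → Y) (n : ℕ) (a : Y) (r : ℝ) : Set Y :=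
  {b | dynDist d T n a b < r}

/-- The covering number of `K` at scale `r` with respect to a distance function `d`. -/
def covNum (d : Y → Y → ℝ) (K : Set Y) (r : ℝ) : ℕ :=
  sInf {m : ℕ | ∃ c : Fin m → Y, K ⊆ ⋃ i, {b | d (c i) b < r}}

/-- The Bowen entropy of `K` w.r.t. `d`: `lim_{r→0} limsup_n (1/n) log Cov_{d^n}(K,r)`. -/
def covEntropy (d : Y → Y → ℝ) (T : Y → Y) (K : Set Y) : EReal :=
  ⨆ r : {r : ℝ // 0 < r},
    limsup (fun n : ℕ => ((Real.log (covNum (dynDist d T n) K r.1) / n : ℝ) : EReal)) atTop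

/-- The entropy of (the join of the first `n` iterates of) a finite measurable partition. -/
def partitionEnt [MeasurableSpace Y] (μ : Measure Y) (T : Y → Y) {k : ℕ}
    (P : Fin k → Set Y) (n : ℕ) : ℝ :=
  ∑ a : Fin n → Fin k, Real.negMulLog (μ (⋂ i : Fin n, T^[(i : ℕ)] ⁻¹' P (a i))).toReal

/-- The Kolmogorov–Sinai entropy of `μ`. -/
def ksEntropy [MeasurableSpace Y] (μ : Measure Y) (T : Y → Y) : EReal :=
  ⨆ (k : ℕ) (P : Fin k → Set Y)
    (_ : (∀ i, MeasurableSet (P i)) ∧ Pairwise (Function.onFun Disjoint P) ∧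
      ⋃ i, P i = Set.univ),
    ((liminf (fun n : ℕ => partitionEnt μ T P n / n) atTop : ℝ) : EReal)

/-- `d` is the distance of a metric inducing the topology of `Y`. -/
def InducesTopology [ts : TopologicalSpace Y] (d : Y → Y → ℝ) : Prop :=
  ∃ m : MetricSpace Y, m.toPseudoMetricSpace.toUniformSpace.toTopologicalSpace = ts ∧
    ∀ a b : Y, @dist Y m.toPseudoMetricSpace.toDist a b = d a b

/-- `d` is the distance of a complete metric inducing the topology of `Y`. -/
def InducesTopologyComplete [ts : TopologicalSpace Y] (d : Y → Y → ℝ) : Prop :=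
  ∃ m : MetricSpace Y, m.toPseudoMetricSpace.toUniformSpace.toTopologicalSpace = ts ∧
    (∀ a b : Y, @dist Y m.toPseudoMetricSpace.toDist a b = d a b) ∧
    @CompleteSpace Y m.toPseudoMetricSpace.toUniformSpace

/-- The upper local entropy of `μ` with respect to the distance `d`. -/
def upperLocalEnt [MeasurableSpace Y] (μ : Measure Y) (T : Y → Y) (d : Y → Y → ℝ) : EReal :=
  essSup (fun y : Y =>
    ⨆ r : {r : ℝ // 0 < r},
      limsup (fun n : ℕ =>
        ((-Real.log (μ (dynBall d T n y r.1)).toReal / n : ℝ) : EReal)) atTop) μ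

/-- The lower local entropy of `μ` with respect to the distance `d`. -/
def lowerLocalEnt [MeasurableSpace Y] (μ : Measure Y) (T : Y → Y) (d : Y → Y → ℝ) : EReal :=
  essInf (fun y : Y =>
    ⨆ r : {r : ℝ // 0 < r},
      liminf (fun n : ℕ =>
        ((-Real.log (μ (dynBall d T n y r.1)).toReal / n : ℝ) : EReal)) atTop) μ

/-- The ergodic invariant probability measures of `(Y,T)`. -/
def ErgProb [MeasurableSpace Y] (T : Y → Y) :=
  {μ : Measure Y // IsProbabilityMeasure μ ∧ Ergodic T μ}

/-- The topological entropy, defined as the supremum of the Kolmogorov–Sinai entropies of the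
ergodic invariant probability measures. -/
def topEnt [MeasurableSpace Y] (T : Y → Y) : EReal :=
  ⨆ μ : ErgProb T, ksEntropy μ.1 T

/-- The upper local entropy of the system: `sup_μ inf_d` of the upper local entropies. -/
def upperLocalEntSys [TopologicalSpace Y] [MeasurableSpace Y] (T : Y → Y) : EReal :=
  ⨆ μ : ErgProb T, ⨅ d : {d : Y → Y → ℝ // InducesTopologyComplete d},
    upperLocalEnt μ.1 T d.1

/-- The lower local entropy of the system: `sup_μ inf_d` of the lower local entropies. -/
def lowerLocalEntSys [TopologicalSpace Y] [MeasurableSpace Y] (T : Y → Y) : EReal :=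
  ⨆ μ : ErgProb T, ⨅ d : {d : Y → Y → ℝ // InducesTopologyComplete d},
    lowerLocalEnt μ.1 T d.1

/-- The invariant topological entropy: in the Bowen formula the supremum is restricted to the
compact `T`-invariant subsets. -/
def invTopEnt [TopologicalSpace Y] (T : Y → Y) : EReal :=
  ⨅ d : {d : Y → Y → ℝ // InducesTopology d},
    ⨆ K : {K : Set Y // IsCompact K ∧ T '' K = K}, covEntropy d.1 T K.1

end Dynamics

end Paper

namespace Paper

/-- The set `K_τ` of `σ`-local geodesics of `Γ\X` whose image stays in the closed ball of radius
`τ` around `πx`. -/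
def Ktau {X : Type*} [MetricSpace X] (G : Type*) [Group G] [MulAction G X] [IsIsometricSMul G X]
    (σ : X → X → ℝ → X) (x : X) (τ : ℝ) : Set ↥(LocGeodQuotSet G σ) :=
  {γ | ∀ n : ℤ, (γ : C(ℝ, QuotX G X)) (n : ℝ) ∈ Metric.closedBall (projQ G x) τ}

end Paper


namespace Paper

section MetricHelpers

variable {X : Type*} [MetricSpace X] {σ : X → X → ℝ → X}

lemma IsGCB.dist_src (h : IsGCB σ) (x y : X) {l : ℝ} (hl : l ∈ Set.Icc (0:ℝ) 1) :
    dist x (σ x y l) = l * dist x y := by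
  have := h.propor x y 0 ⟨le_refl 0, zero_le_one⟩ l hl
  rw [h.source] at this
  rw [this, abs_of_nonpos (by linarith [hl.1])]
  ring_nf

lemma IsGCB.dist_tgt (h : IsGCB σ) (x y : X) {l : ℝ} (hl : l ∈ Set.Icc (0:ℝ) 1) :
    dist (σ x y l) y = (1 - l) * dist x y := by
  have := h.propor x y l hl 1 ⟨zero_le_one, le_refl 1⟩
  rw [h.target] at this
  rw [this, abs_of_nonpos (by linarith [hl.2])]
  ring_nf

lemma IsGCB.lip (h : IsGCB σ) (x y x' y' : X) {l : ℝ} (hl : l ∈ Set.Icc (0:ℝ) 1) :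
    dist (σ x y l) (σ x' y' l) ≤ max (dist x x') (dist y y') := by
  have hc := (h.convex x y x' y').2 (Set.left_mem_Icc.2 zero_le_one)
    (Set.right_mem_Icc.2 zero_le_one) (by linarith [hl.2] : (0:ℝ) ≤ 1 - l) hl.1 (by ring)
  simp only [smul_eq_mul, mul_zero, mul_one, zero_add] at hc
  have h0 : dist (σ x y 0) (σ x' y' 0) = dist x x' := by rw [h.source, h.source]
  have h1 : dist (σ x y 1) (σ x' y' 1) = dist y y' := by rw [h.target, h.target]
  calc dist (σ x y l) (σ x' y' l) ≤ (1 - l) * dist x x' + l * dist y y' := by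
        rw [← h0, ← h1]; exact hc
    _ ≤ max (dist x x') (dist y y') := by
        have m0 : dist x x' ≤ max (dist x x') (dist y y') := le_max_left _ _
        have m1 : dist y y' ≤ max (dist x x') (dist y y') := le_max_right _ _
        nlinarith [hl.1, hl.2]

lemma IsGCB.contract (h : IsGCB σ) (z w₁ w₂ : X) {l : ℝ} (hl : l ∈ Set.Icc (0:ℝ) 1) :
    dist (σ z w₁ l) (σ z w₂ l) ≤ l * dist w₁ w₂ := by
  have hc := (h.convex z w₁ z w₂).2 (Set.left_mem_Icc.2 zero_le_one)
    (Set.right_mem_Icc.2 zero_le_one) (by linarith [hl.2] : (0:ℝ) ≤ 1 - l) hl.1 (by ring)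
  simp only [smul_eq_mul, mul_zero, mul_one, zero_add] at hc
  have h0 : dist (σ z w₁ 0) (σ z w₂ 0) = 0 := by rw [h.source, h.source, dist_self]
  have h1 : dist (σ z w₁ 1) (σ z w₂ 1) = dist w₁ w₂ := by rw [h.target, h.target]
  calc dist (σ z w₁ l) (σ z w₂ l)
      ≤ (1 - l) * dist (σ z w₁ 0) (σ z w₂ 0) + l * dist (σ z w₁ 1) (σ z w₂ 1) := hc
    _ = l * dist w₁ w₂ := by rw [h0, h1]; ring

lemma IsGCB.exists_ext (h : IsGCB σ) (z y : X) {μ : ℝ} (hμ0 : 0 < μ) (hμ1 : μ ≤ 1) :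
    ∃ w : X, dist z w = dist z y / μ ∧ σ z w μ = y := by
  obtain ⟨γ, hγ, a, b, hab, hlen, hpar⟩ := h.geodComplete z y
  set L : ℝ := (b - a) / μ with hL
  have hL0 : 0 ≤ L := div_nonneg (by linarith) hμ0.le
  have hga : γ a = z := by
    have := hpar 0 ⟨le_refl 0, zero_le_one⟩
    rw [h.source] at this
    simpa using this
  refine ⟨γ (a + L), ?_, ?_⟩
  · calc dist z (γ (a + L)) = dist (γ a) (γ (a + L)) := by rw [hga]
      _ = |a - (a + L)| := by rw [hγ.isom.dist_eq, Real.dist_eq]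
      _ = L := by rw [abs_of_nonpos (by linarith)]; ring
      _ = dist z y / μ := by rw [hL, hlen]
  · have hseg := hγ.seg a (a + L) (by linarith) μ ⟨hμ0.le, hμ1⟩
    rw [hga] at hseg
    have he : a + μ * (a + L - a) = a + 1 * (b - a) := by
      have : μ * L = b - a := by rw [hL]; field_simp
      rw [show a + L - a = L by ring]
      rw [this]; ring
    rw [hseg, he, hpar 1 ⟨zero_le_one, le_refl 1⟩, h.target]

lemma IsGCB.pack_small (h : IsGCB σ) {P₀ : ℕ} {r₀ : ℝ} (hpack : IsPacked X P₀ r₀)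
    {r : ℝ} (hr : 0 < r) (hrr : r ≤ r₀) : IsPacked X P₀ r := by
  classical
  intro z s hs hsep
  have hr₀ : 0 < r₀ := lt_of_lt_of_le hr hrr
  set μ : ℝ := r / r₀ with hμ
  have hμ0 : 0 < μ := div_pos hr hr₀
  have hμ1 : μ ≤ 1 := (div_le_one hr₀).2 hrr
  have hch : ∀ y : X, ∃ w : X, dist z w = dist z y / μ ∧ σ z w μ = y := fun y =>
    h.exists_ext z y hμ0 hμ1
  choose w hw1 hw2 using hch
  have hinj : Set.InjOn w ↑s := by
    intro y₁ _ y₂ _ he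
    rw [← hw2 y₁, ← hw2 y₂, he]
  have hcard : (s.image w).card = s.card := Finset.card_image_of_injOn hinj
  have h1 : (↑(s.image w) : Set X) ⊆ Metric.closedBall z (3 * r₀) := by
    intro p hp
    simp only [Finset.coe_image, Set.mem_image] at hp
    obtain ⟨y, hy, rfl⟩ := hp
    have := hs hy
    rw [Metric.mem_closedBall] at this ⊢
    rw [dist_comm] at this ⊢
    rw [hw1 y]
    rw [div_le_iff₀ hμ0]
    calc dist z y ≤ 3 * r := this
      _ = 3 * r₀ * μ := by rw [hμ]; field_simp
  have h2 : ∀ p ∈ s.image w, ∀ q ∈ s.image w, p ≠ q → 2 * r₀ < dist p q := by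
    intro p hp q hq hpq
    simp only [Finset.mem_image] at hp hq
    obtain ⟨y₁, hy₁, rfl⟩ := hp
    obtain ⟨y₂, hy₂, rfl⟩ := hq
    have hne : y₁ ≠ y₂ := by rintro rfl; exact hpq rfl
    have hd : 2 * r < dist y₁ y₂ := hsep y₁ hy₁ y₂ hy₂ hne
    have hcon : dist y₁ y₂ ≤ μ * dist (w y₁) (w y₂) := by
      have := h.contract z (w y₁) (w y₂) ⟨hμ0.le, hμ1⟩
      rw [hw2 y₁, hw2 y₂] at this
      exact this
    have : 2 * r < μ * dist (w y₁) (w y₂) := lt_of_lt_of_le hd hcon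
    rw [hμ] at this
    rw [div_mul_eq_mul_div, lt_div_iff₀ hr₀] at this
    nlinarith
  calc s.card = (s.image w).card := hcard.symm
    _ ≤ P₀ := hpack z (s.image w) h1 h2

lemma IsGCB.sep_bound (h : IsGCB σ) {P₀ : ℕ} {r₀ : ℝ} (hpack : IsPacked X P₀ r₀) :
    ∀ (k : ℕ) (r : ℝ), 0 < r → r ≤ r₀ → ∀ (z : X) (s : Finset X),
      (↑s : Set X) ⊆ Metric.closedBall z (3 * r + k * r) →
      (∀ y ∈ s, ∀ y' ∈ s, y ≠ y' → 2 * r < dist y y') → s.card ≤ P₀ ^ (k + 1) := by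
  classical
  intro k
  induction k with
  | zero =>
    intro r hr hrr z s hs hsep
    rw [pow_one]
    exact h.pack_small hpack hr hrr z s (by simpa using hs) hsep
  | succ k IH =>
    intro r hr hrr z s hs hsep
    set R' : ℝ := 3 * r + k * r with hR'
    have hR'pos : 0 < R' := by positivity
    set proj : X → X := fun y => if dist z y ≤ R' then y else σ z y (R' / dist z y) with hproj
    have hmem : ∀ y, dist z y ≤ 3 * r + (k + 1 : ℕ) * r →
        dist z (proj y) ≤ R' ∧ dist (proj y) y ≤ r := by
      intro y hy
      by_cases hc : dist z y ≤ R'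
      · simp only [hproj, if_pos hc]
        exact ⟨hc, by simp [hr.le]⟩
      · push_neg at hc
        have hd0 : 0 < dist z y := lt_trans hR'pos hc
        have hlmem : R' / dist z y ∈ Set.Icc (0:ℝ) 1 :=
          ⟨div_nonneg hR'pos.le hd0.le, (div_le_one hd0).2 hc.le⟩
        have h1 : dist z (proj y) = R' := by
          simp only [hproj, if_neg (not_le.2 hc)]
          rw [h.dist_src z y hlmem]
          field_simp
        have h2 : dist (proj y) y = dist z y - R' := by
          simp only [hproj, if_neg (not_le.2 hc)]
          rw [h.dist_tgt z y hlmem]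
          field_simp
        refine ⟨le_of_eq h1, ?_⟩
        rw [h2]
        have : (↑(k + 1) : ℝ) * r = k * r + r := by push_cast; ring
        rw [this] at hy
        rw [hR']
        linarith
    set F : Finset (Finset X) := (s.image proj).powerset.filter
      (fun u => ∀ a ∈ u, ∀ b ∈ u, a ≠ b → 2 * r < dist a b) with hF
    have hFne : F.Nonempty := ⟨∅, by simp [hF]⟩
    obtain ⟨u, huF, humax⟩ := F.exists_max_image Finset.card hFne
    have huprop := (Finset.mem_filter.1 huF)
    have husub : u ⊆ s.image proj := Finset.mem_powerset.1 huprop.1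
    have husep := huprop.2
    have hucard : u.card ≤ P₀ ^ (k + 1) := by
      refine IH r hr hrr z u ?_ husep
      intro p hp
      obtain ⟨y, hy, rfl⟩ := Finset.mem_image.1 (husub hp)
      have hyb : dist z y ≤ 3 * r + (k + 1 : ℕ) * r := by
        have := hs hy
        rw [Metric.mem_closedBall, dist_comm] at this
        exact this
      exact Metric.mem_closedBall.2 (by rw [dist_comm]; exact (hmem y hyb).1)
    have hnet : ∀ p ∈ s.image proj, ∃ t ∈ u, dist t p ≤ 2 * r := by
      intro p hp
      by_contra hcon
      push_neg at hcon
      have hpu : p ∉ u := by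
        intro hpu
        have := hcon p hpu
        rw [dist_self] at this
        linarith
      have hins : insert p u ∈ F := by
        rw [hF, Finset.mem_filter, Finset.mem_powerset]
        refine ⟨Finset.insert_subset hp husub, ?_⟩
        intro a ha b hb hab
        rcases Finset.mem_insert.1 ha with ha' | ha' <;>
          rcases Finset.mem_insert.1 hb with hb' | hb'
        · exact absurd (ha'.trans hb'.symm) hab
        · subst ha'; rw [dist_comm]; exact hcon b hb'
        · subst hb'; exact hcon a ha'
        · exact husep a ha' b hb' hab
      have := humax _ hins
      rw [Finset.card_insert_of_notMem hpu] at this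
      omega
    have hcover : s ⊆ u.biUnion (fun t => s.filter (fun y => dist t y ≤ 3 * r)) := by
      intro y hy
      have hyb : dist z y ≤ 3 * r + (k + 1 : ℕ) * r := by
        have := hs hy
        rw [Metric.mem_closedBall, dist_comm] at this
        exact this
      obtain ⟨t, ht, htd⟩ := hnet (proj y) (Finset.mem_image_of_mem proj hy)
      refine Finset.mem_biUnion.2 ⟨t, ht, Finset.mem_filter.2 ⟨hy, ?_⟩⟩
      calc dist t y ≤ dist t (proj y) + dist (proj y) y := dist_triangle _ _ _
        _ ≤ 2 * r + r := add_le_add htd (hmem y hyb).2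
        _ = 3 * r := by ring
    have hfil : ∀ t ∈ u, (s.filter (fun y => dist t y ≤ 3 * r)).card ≤ P₀ := by
      intro t _
      refine h.pack_small hpack hr hrr t _ ?_ ?_
      · intro y hy
        simp only [Finset.coe_filter, Set.mem_setOf_eq] at hy
        exact Metric.mem_closedBall.2 (by rw [dist_comm]; exact hy.2)
      · intro a ha b hb hab
        exact hsep a (Finset.mem_of_mem_filter a ha) b (Finset.mem_of_mem_filter b hb) hab
    calc s.card ≤ (u.biUnion (fun t => s.filter (fun y => dist t y ≤ 3 * r))).card :=
          Finset.card_le_card hcover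
      _ ≤ ∑ t ∈ u, (s.filter (fun y => dist t y ≤ 3 * r)).card := Finset.card_biUnion_le
      _ ≤ ∑ _t ∈ u, P₀ := Finset.sum_le_sum hfil
      _ = u.card * P₀ := by rw [Finset.sum_const, smul_eq_mul]
      _ ≤ P₀ ^ (k + 1) * P₀ := Nat.mul_le_mul_right _ hucard
      _ = P₀ ^ (k + 1 + 1) := by ring

lemma IsGCB.totallyBounded_ball (h : IsGCB σ) {P₀ : ℕ} {r₀ : ℝ} (hr₀ : 0 < r₀)
    (hpack : IsPacked X P₀ r₀) (z : X) (R : ℝ) :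
    TotallyBounded (Metric.closedBall z R) := by
  classical
  rw [Metric.totallyBounded_iff]
  intro ε hε
  set r : ℝ := min (ε / 3) r₀ with hrdef
  have hr : 0 < r := lt_min (by linarith) hr₀
  have hrr : r ≤ r₀ := min_le_right _ _
  have hrε : 2 * r < ε := by
    have : r ≤ ε / 3 := min_le_left _ _
    linarith
  set k : ℕ := ⌈R / r⌉₊ with hk
  have hRk : R ≤ 3 * r + k * r := by
    rcases le_or_gt R 0 with hR0 | hR0
    · have : (0:ℝ) ≤ k * r := by positivity
      linarith
    · have h1 : R / r ≤ (k : ℝ) := Nat.le_ceil _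
      have h2 : R ≤ k * r := by
        rw [div_le_iff₀ hr] at h1
        linarith
      linarith
  set N : ℕ := P₀ ^ (k + 1) with hN
  set Q : ℕ → Prop := fun n => ∃ u : Finset X, (↑u : Set X) ⊆ Metric.closedBall z R ∧
    (∀ a ∈ u, ∀ b ∈ u, a ≠ b → 2 * r < dist a b) ∧ u.card = n with hQ
  have hQ0 : Q 0 := ⟨∅, by simp, by simp, by simp⟩
  have hQle : ∀ n, Q n → n ≤ N := by
    rintro n ⟨u, hu1, hu2, rfl⟩
    refine h.sep_bound hpack k r hr hrr z u ?_ hu2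
    intro p hp
    exact Metric.mem_closedBall.2 (le_trans (Metric.mem_closedBall.1 (hu1 hp)) hRk)
  set n₀ : ℕ := Nat.findGreatest Q N with hn₀
  have hQn₀ : Q n₀ := Nat.findGreatest_spec (Nat.zero_le N) hQ0
  obtain ⟨u, hu1, hu2, hu3⟩ := hQn₀
  refine ⟨↑u, u.finite_toSet, ?_⟩
  intro y hy
  have hnear : ∃ t ∈ u, dist t y ≤ 2 * r := by
    by_contra hcon
    push_neg at hcon
    have hyu : y ∉ u := fun hyu => by
      have := hcon y hyu
      rw [dist_self] at this
      linarith
    have hQins : Q (n₀ + 1) := by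
      refine ⟨insert y u, ?_, ?_, ?_⟩
      · intro p hp
        rcases Finset.mem_insert.1 (by exact_mod_cast hp) with rfl | hp'
        · exact hy
        · exact hu1 hp'
      · intro a ha b hb hab
        rcases Finset.mem_insert.1 ha with ha' | ha' <;>
          rcases Finset.mem_insert.1 hb with hb' | hb'
        · exact absurd (ha'.trans hb'.symm) hab
        · subst ha'; rw [dist_comm]; exact hcon b hb'
        · subst hb'; exact hcon a ha'
        · exact hu2 a ha' b hb' hab
      · rw [Finset.card_insert_of_notMem hyu, hu3]
    exact Nat.findGreatest_is_greatest (by omega) (hQle _ hQins) hQins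
  obtain ⟨t, ht, htd⟩ := hnear
  exact Set.mem_biUnion ht (Metric.mem_ball.2 (by rw [dist_comm]; linarith))

lemma IsGCB.isCompact_closedBall' [CompleteSpace X] (h : IsGCB σ) {P₀ : ℕ} {r₀ : ℝ}
    (hr₀ : 0 < r₀) (hpack : IsPacked X P₀ r₀) (z : X) (R : ℝ) :
    IsCompact (Metric.closedBall z R) :=
  TotallyBounded.isCompact_of_isClosed (h.totallyBounded_ball hr₀ hpack z R)
    Metric.isClosed_closedBall

lemma IsGCB.continuous_pair (h : IsGCB σ) {l : ℝ} (hl : l ∈ Set.Icc (0:ℝ) 1) :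
    Continuous fun p : X × X => σ p.1 p.2 l :=
  (LipschitzWith.of_dist_le_mul (K := 1) fun p q => by
    simpa [Prod.dist_eq] using h.lip p.1 p.2 q.1 q.2 hl).continuous

end MetricHelpers

section GroupHelpers

variable {X : Type*} [MetricSpace X] {σ : X → X → ℝ → X}
variable (G : Type*) [Group G] [MulAction G X] [IsIsometricSMul G X]

lemma projQ_smul (g : G) (z : X) : projQ G (g • z) = projQ G z :=
  Quotient.sound ((MulAction.orbitRel_apply (G := G)).mpr (MulAction.mem_orbit_iff.mpr ⟨g, rfl⟩))

lemma dist_smul_helper (c g : G) (a b : X) :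
    dist (c • a) (g • b) = dist a ((c⁻¹ * g) • b) := by
  rw [← dist_smul c a ((c⁻¹ * g) • b), smul_smul, mul_inv_cancel_left]

lemma qdist_eq' (z w : X) :
    dist (projQ G z) (projQ G w) = ⨅ g : G, dist z (g • w) := by
  obtain ⟨k, hk⟩ := MulAction.mem_orbit_iff.mp
    ((MulAction.orbitRel_apply (G := G)).mp (Quotient.mk_out (s := MulAction.orbitRel G X) z))
  obtain ⟨l, hl⟩ := MulAction.mem_orbit_iff.mp
    ((MulAction.orbitRel_apply (G := G)).mp (Quotient.mk_out (s := MulAction.orbitRel G X) w))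
  have hrange : (Set.range fun g : G =>
      dist (Quotient.out (projQ G z)) (g • Quotient.out (projQ G w)))
      = Set.range fun g : G => dist z (g • w) := by
    replace hk : k • z = Quotient.out (projQ G z) := hk
    replace hl : l • w = Quotient.out (projQ G w) := hl
    ext d
    simp only [Set.mem_range]
    constructor
    · rintro ⟨g, rfl⟩
      refine ⟨k⁻¹ * (g * l), ?_⟩
      rw [← hk, ← hl, ← mul_smul, dist_smul_helper]
    · rintro ⟨g, rfl⟩
      refine ⟨k * g * l⁻¹, ?_⟩
      rw [← hk, ← hl, ← mul_smul, dist_smul_helper]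
      congr 2
      group
  show (⨅ g : G, dist (Quotient.out (projQ G z)) (g • Quotient.out (projQ G w))) = _
  rw [iInf, iInf, hrange]

lemma exists_rep (hdisc : DiscreteAction G X) (z w : X) {τ : ℝ}
    (h : dist (projQ G z) (projQ G w) ≤ τ) : ∃ g : G, dist z (g • w) ≤ τ := by
  classical
  haveI : Nonempty G := ⟨1⟩
  have hbdd : BddBelow (Set.range fun g : G => dist z (g • w)) :=
    ⟨0, by rintro _ ⟨g, rfl⟩; exact dist_nonneg⟩
  set q : ℝ := ⨅ g : G, dist z (g • w) with hq
  have hqτ : q ≤ τ := by rw [hq, ← qdist_eq' G z w]; exact h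
  obtain ⟨g₀, hg₀⟩ : ∃ g : G, dist z (g • w) < q + 1 := by
    refine exists_lt_of_ciInf_lt ?_
    rw [← hq]; linarith
  have hfin : {g : G | dist z (g • w) ≤ q + 1}.Finite := by
    refine (hdisc z (q + 1 + dist w z)).subset ?_
    intro g hg
    simp only [Set.mem_setOf_eq] at hg ⊢
    calc dist z (g • z) ≤ dist z (g • w) + dist (g • w) (g • z) := dist_triangle _ _ _
      _ = dist z (g • w) + dist w z := by rw [dist_smul]
      _ ≤ q + 1 + dist w z := by linarith
  have hg₀F : g₀ ∈ hfin.toFinset := hfin.mem_toFinset.2 hg₀.le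
  obtain ⟨g₁, hg₁F, hg₁min⟩ := hfin.toFinset.exists_min_image
    (fun g => dist z (g • w)) ⟨g₀, hg₀F⟩
  refine ⟨g₁, ?_⟩
  by_contra hcon
  push_neg at hcon
  have hq_lt : (⨅ g : G, dist z (g • w)) < dist z (g₁ • w) := by
    rw [← hq]; exact lt_of_le_of_lt hqτ hcon
  obtain ⟨g₂, hg₂⟩ := exists_lt_of_ciInf_lt hq_lt
  have hm : dist z (g₁ • w) ≤ dist z (g₀ • w) := hg₁min g₀ hg₀F
  have hg₂F : g₂ ∈ hfin.toFinset := by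
    refine hfin.mem_toFinset.2 ?_
    simp only [Set.mem_setOf_eq]
    linarith
  have := hg₁min g₂ hg₂F
  linarith

lemma smul_line (hequiv : SigmaEquivariant G σ) (g : G) {γ : ℝ → X}
    (h : IsSigmaGeodLine σ γ) : IsSigmaGeodLine σ (fun t => g • γ t) := by
  constructor
  · exact (Isometry.of_dist_eq fun a b => dist_smul g a b).comp h.isom
  · intro s t hst l hl
    rw [← hequiv g (γ s) (γ t) l hl, h.seg s t hst l hl]

end GroupHelpers

end Paper

namespace Paper

section Main

variable {X : Type*} [MetricSpace X] {σ : X → X → ℝ → X}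
variable (G : Type*) [Group G] [MulAction G X] [IsIsometricSMul G X]

lemma isCompact_Ktau [CompleteSpace X] (hGCB : IsGCB σ) {P₀ : ℕ} {r₀ : ℝ}
    (hr₀ : 0 < r₀) (hpack : IsPacked X P₀ r₀) (hdisc : DiscreteAction G X)
    (hequiv : SigmaEquivariant G σ) (x : X) (τ : ℝ) :
    IsCompact (Ktau G σ x τ) := by
  rw [Subtype.isCompact_iff]
  set P1 : Set (ℝ → X) := {f | ∀ s t : ℝ, dist (f s) (f t) = dist s t} with hP1def
  set P2 : Set (ℝ → X) := {f | ∀ s t : ℝ, s ≤ t → ∀ l : ℝ, l ∈ Set.Icc (0:ℝ) 1 →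
    σ (f s) (f t) l = f (s + l * (t - s))} with hP2def
  set P3 : Set (ℝ → X) := {f | dist x (f 0) ≤ τ} with hP3def
  set P4 : Set (ℝ → X) := {f | ∀ n : ℤ, dist (projQ G (f (n : ℝ))) (projQ G x) ≤ τ} with hP4def
  set C : Set (ℝ → X) := Set.pi Set.univ (fun t : ℝ => Metric.closedBall x (τ + |t|)) with hCdef
  set A : Set C(ℝ, X) := {γ | IsSigmaGeodLine σ ⇑γ ∧ dist x (γ 0) ≤ τ ∧
    ∀ n : ℤ, dist (projQ G (γ (n : ℝ))) (projQ G x) ≤ τ} with hAdef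
  have himage : ContinuousMap.toFun '' A = P1 ∩ P2 ∩ P3 ∩ P4 ∩ C := by
    ext f
    constructor
    · rintro ⟨γ, ⟨hline, h0, hn⟩, rfl⟩
      refine ⟨⟨⟨⟨fun s t => hline.isom.dist_eq s t,
        fun s t hst l hl => hline.seg s t hst l hl⟩, h0⟩, hn⟩, ?_⟩
      intro t _
      simp only [Metric.mem_closedBall]
      show dist (γ t) x ≤ τ + |t|
      calc dist (γ t) x ≤ dist (γ t) (γ 0) + dist (γ 0) x := dist_triangle _ _ _
        _ ≤ |t| + τ := by
            rw [hline.isom.dist_eq, Real.dist_eq, sub_zero, dist_comm]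
            linarith
        _ = τ + |t| := by ring
    · rintro ⟨⟨⟨⟨h1, h2⟩, h3⟩, h4⟩, -⟩
      have hiso : Isometry f := Isometry.of_dist_eq h1
      exact ⟨⟨f, hiso.continuous⟩, ⟨⟨hiso, fun s t hst l hl => h2 s t hst l hl⟩, h3, h4⟩, rfl⟩
  have hC : IsCompact C :=
    isCompact_univ_pi fun t => hGCB.isCompact_closedBall' hr₀ hpack x (τ + |t|)
  have hP1 : IsClosed P1 := by
    have : P1 = ⋂ (s : ℝ), ⋂ (t : ℝ), {f : ℝ → X | dist (f s) (f t) = dist s t} := by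
      ext f; simp [hP1def, Set.mem_iInter]
    rw [this]
    exact isClosed_iInter fun s => isClosed_iInter fun t =>
      isClosed_eq ((continuous_apply s).dist (continuous_apply t)) continuous_const
  have hP2 : IsClosed P2 := by
    have : P2 = ⋂ (s : ℝ), ⋂ (t : ℝ), ⋂ (l : ℝ),
        {f : ℝ → X | s ≤ t → l ∈ Set.Icc (0:ℝ) 1 → σ (f s) (f t) l = f (s + l * (t - s))} := by
      ext f
      simp only [hP2def, Set.mem_setOf_eq, Set.mem_iInter, Set.mem_Icc]
      tauto
    rw [this]
    refine isClosed_iInter fun s => isClosed_iInter fun t => isClosed_iInter fun l => ?_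
    by_cases hst : s ≤ t
    · by_cases hl : l ∈ Set.Icc (0:ℝ) 1
      · have he : {f : ℝ → X | s ≤ t → l ∈ Set.Icc (0:ℝ) 1 →
            σ (f s) (f t) l = f (s + l * (t - s))}
            = {f : ℝ → X | σ (f s) (f t) l = f (s + l * (t - s))} := by
          ext f; simp [hst, hl]
        rw [he]
        have hmid : Continuous fun f : ℝ → X => ((f s, f t) : X × X) :=
          Continuous.prodMk (continuous_apply s) (continuous_apply t)
        have hcont : Continuous fun f : ℝ → X => σ (f s) (f t) l := by
          exact (hGCB.continuous_pair hl).comp hmid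
        exact isClosed_eq hcont (continuous_apply _)
      · have he : {f : ℝ → X | s ≤ t → l ∈ Set.Icc (0:ℝ) 1 →
            σ (f s) (f t) l = f (s + l * (t - s))} = Set.univ := by
          ext f; simp [hl]
        rw [he]; exact isClosed_univ
    · have he : {f : ℝ → X | s ≤ t → l ∈ Set.Icc (0:ℝ) 1 →
          σ (f s) (f t) l = f (s + l * (t - s))} = Set.univ := by
        ext f; simp [hst]
      rw [he]; exact isClosed_univ
  have hP3 : IsClosed P3 :=
    isClosed_le (continuous_const.dist (continuous_apply 0)) continuous_const
  have hP4 : IsClosed P4 := by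
    have : P4 = ⋂ (n : ℤ), {f : ℝ → X | dist (projQ G (f (n : ℝ))) (projQ G x) ≤ τ} := by
      ext f; simp [hP4def, Set.mem_iInter]
    rw [this]
    refine isClosed_iInter fun n => isClosed_le ?_ continuous_const
    have hπ : Continuous (projQ G : X → QuotX G X) := (projCM G).continuous
    exact Continuous.dist (hπ.comp (continuous_apply ((n : ℤ) : ℝ))) continuous_const
  have hPc : IsCompact (P1 ∩ P2 ∩ P3 ∩ P4 ∩ C) := by
    refine IsCompact.of_isClosed_subset hC ?_ ?_
    · exact ((((hP1.inter hP2).inter hP3).inter hP4).inter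
        (isClosed_set_pi fun t _ => Metric.isClosed_closedBall))
    · intro f hf; exact hf.2
  have hAcomp : IsCompact A := by
    refine ArzelaAscoli.isCompact_of_equicontinuous A (by rw [himage]; exact hPc) ?_
    refine Metric.equicontinuous_of_continuity_modulus (fun d => d) tendsto_id _ ?_
    intro s t i
    exact le_of_eq (i.2.1.isom.dist_eq s t)
  have himg : Subtype.val '' (Ktau G σ x τ) = projComp G '' A := by
    ext ψ
    constructor
    · rintro ⟨φ, hφK, rfl⟩
      obtain ⟨γ, hγline, hγproj⟩ := φ.2
      have hφn : ∀ n : ℤ, dist (projQ G (γ (n : ℝ))) (projQ G x) ≤ τ := by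
        intro n
        have := hφK n
        rw [Metric.mem_closedBall] at this
        have he : (φ : C(ℝ, QuotX G X)) (n : ℝ) = projQ G (γ (n : ℝ)) := by
          rw [← hγproj]; rfl
        rwa [he] at this
      have h0 : dist (projQ G x) (projQ G (γ 0)) ≤ τ := by
        have := hφn 0
        rw [dist_comm]
        simpa using this
      obtain ⟨g, hg⟩ := exists_rep G hdisc x (γ 0) h0
      refine ⟨⟨fun t => g • γ t,
        ((Isometry.of_dist_eq fun a b => dist_smul g a b).continuous).comp γ.continuous⟩,
        ⟨smul_line G hequiv g hγline, by simpa using hg, ?_⟩, ?_⟩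
      · intro n
        show dist (projQ G (g • γ (n : ℝ))) (projQ G x) ≤ τ
        rw [projQ_smul]
        exact hφn n
      · rw [← hγproj]
        ext t
        show projQ G (g • γ t) = projQ G (γ t)
        rw [projQ_smul]
    · rintro ⟨γ, ⟨hline, h0, hn⟩, rfl⟩
      refine ⟨⟨projComp G γ, ⟨γ, hline, rfl⟩⟩, ?_, rfl⟩
      intro n
      rw [Metric.mem_closedBall]
      exact hn n
  rw [himg]
  exact hAcomp.image (ContinuousMap.continuous_postcomp _)

lemma flowOne_iter_apply (m : ℕ) (γ : ↥(LocGeodQuotSet G σ)) (t : ℝ) :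
    (((flowOne G σ)^[m] γ : ↥(LocGeodQuotSet G σ)) : C(ℝ, QuotX G X)) t
      = (γ : C(ℝ, QuotX G X)) (t + m) := by
  induction m generalizing γ t with
  | zero => simp
  | succ m IH =>
    rw [Function.iterate_succ_apply, IH (flowOne G σ γ) t]
    show (γ : C(ℝ, QuotX G X)) ((t + m) + 1) = _
    congr 1
    push_cast
    ring

end Main

end Paper

open Paper in
/-- Let `(X,σ)` be a `δ`-hyperbolic GCB-space which is `P₀`-packed at scale
`r₀`, `Γ = G` a group of `σ`-isometries acting discretely and freely, and `x ∈ X`. Then `K_τ` is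
a compact `Φ₁`-invariant subset of `Loc-Geod_σ(Γ\X)` for every `τ ≥ 0`, and every compact
`Φ₁`-invariant subset is contained in some `K_τ`. -/
theorem statement_17 {X : Type*} [MetricSpace X] [CompleteSpace X]
    (σ : X → X → ℝ → X) (hGCB : IsGCB σ)
    (δ : ℝ) (hδ : 0 ≤ δ) (hhyp : IsHyperbolic X δ)
    (P₀ : ℕ) (r₀ : ℝ) (hr₀ : 0 < r₀) (hpack : IsPacked X P₀ r₀)
    (G : Type*) [Group G] [MulAction G X] [IsIsometricSMul G X]
    (hdisc : DiscreteAction G X) (hfree : FreeAction G X)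
    (hequiv : SigmaEquivariant G σ) (x : X) :
    (∀ τ : ℝ, 0 ≤ τ → IsCompact (Ktau G σ x τ) ∧ flowOne G σ '' Ktau G σ x τ = Ktau G σ x τ) ∧
    (∀ K : Set ↥(LocGeodQuotSet G σ), IsCompact K → flowOne G σ '' K = K →
      ∃ τ : ℝ, 0 ≤ τ ∧ K ⊆ Ktau G σ x τ) := by
  constructor
  · intro τ hτ
    refine ⟨isCompact_Ktau G hGCB hr₀ hpack hdisc hequiv x τ, ?_⟩
    apply Set.Subset.antisymm
    · rintro _ ⟨φ, hφ, rfl⟩ n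
      show (φ : C(ℝ, QuotX G X)) ((n : ℝ) + 1) ∈ Metric.closedBall (projQ G x) τ
      have hcast : ((n : ℝ) + 1) = ((n + 1 : ℤ) : ℝ) := by push_cast; ring
      rw [hcast]
      exact hφ (n + 1)
    · intro φ hφ
      refine ⟨⟨shiftCM (-1) (φ : C(ℝ, QuotX G X)), shift_mem G (-1) φ.2⟩, ?_, ?_⟩
      · intro n
        show (φ : C(ℝ, QuotX G X)) ((n : ℝ) + (-1)) ∈ Metric.closedBall (projQ G x) τ
        have hcast : ((n : ℝ) + (-1)) = ((n - 1 : ℤ) : ℝ) := by push_cast; ring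
        rw [hcast]
        exact hφ (n - 1)
      · apply Subtype.ext
        ext t
        show (φ : C(ℝ, QuotX G X)) ((t + 1) + (-1)) = (φ : C(ℝ, QuotX G X)) t
        norm_num
  · intro K hK hinv
    have hev : Continuous fun φ : ↥(LocGeodQuotSet G σ) => (φ : C(ℝ, QuotX G X)) 0 :=
      (continuous_eval_const (0 : ℝ)).comp continuous_subtype_val
    have hcomp : IsCompact ((fun φ : ↥(LocGeodQuotSet G σ) =>
        (φ : C(ℝ, QuotX G X)) 0) '' K) := hK.image hev
    obtain ⟨ρ, hρ⟩ := hcomp.isBounded.subset_closedBall (projQ G x)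
    refine ⟨max ρ 0, le_max_right _ _, ?_⟩
    have hfwd : ∀ m : ℕ, ∀ φ ∈ K, (flowOne G σ)^[m] φ ∈ K := by
      intro m
      induction m with
      | zero => intro φ hφ; simpa using hφ
      | succ m IH =>
        intro φ hφ
        rw [Function.iterate_succ_apply']
        rw [← hinv]
        exact ⟨_, IH φ hφ, rfl⟩
    have hbwd : ∀ m : ℕ, ∀ φ ∈ K, ∃ ψ ∈ K, (flowOne G σ)^[m] ψ = φ := by
      intro m
      induction m with
      | zero => intro φ hφ; exact ⟨φ, hφ, rfl⟩
      | succ m IH =>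
        intro φ hφ
        have hφ' : φ ∈ flowOne G σ '' K := by rw [hinv]; exact hφ
        obtain ⟨φ', hφ'K, rfl⟩ := hφ'
        obtain ⟨ψ, hψ, rfl⟩ := IH φ' hφ'K
        exact ⟨ψ, hψ, by rw [Function.iterate_succ_apply']⟩
    intro φ hφ n
    rcases le_or_gt 0 n with hn | hn
    · set m := n.toNat with hm
      have hmc : ((m : ℕ) : ℝ) = (n : ℝ) := by
        rw [hm]
        exact_mod_cast congrArg (fun z : ℤ => (z : ℝ)) (Int.toNat_of_nonneg hn)
      have h1 := hfwd m φ hφ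
      have h3 : (((flowOne G σ)^[m] φ : ↥(LocGeodQuotSet G σ)) : C(ℝ, QuotX G X)) 0
          ∈ Metric.closedBall (projQ G x) ρ := hρ ⟨_, h1, rfl⟩
      rw [flowOne_iter_apply, zero_add, hmc] at h3
      exact Metric.closedBall_subset_closedBall (le_max_left ρ 0) h3
    · set m := (-n).toNat with hm
      have hmc : ((m : ℕ) : ℝ) = -(n : ℝ) := by
        rw [hm]
        exact_mod_cast congrArg (fun z : ℤ => (z : ℝ)) (Int.toNat_of_nonneg (by linarith))
      obtain ⟨ψ, hψ, rfl⟩ := hbwd m φ hφ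
      have h3 : ((ψ : ↥(LocGeodQuotSet G σ)) : C(ℝ, QuotX G X)) 0
          ∈ Metric.closedBall (projQ G x) ρ := hρ ⟨_, hψ, rfl⟩
      show (((flowOne G σ)^[m] ψ : ↥(LocGeodQuotSet G σ)) : C(ℝ, QuotX G X)) (n : ℝ)
        ∈ Metric.closedBall (projQ G x) (max ρ 0)
      rw [flowOne_iter_apply]
      have hzero : (n : ℝ) + (m : ℝ) = 0 := by rw [hmc]; ring
      rw [hzero]
      exact Metric.closedBall_subset_closedBall (le_max_left ρ 0) h3
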